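/- Let σ be a syndrome attained by some error and let C, C' be classes having syndrome σ with n_max(C) > n_max(C'). Then there exists T₀ > 0 such that for all temperatures T with 0 < T < T₀ one has Z_T(C) > Z_T(C'); that is, at sufficiently low temperature the partition function of a class containing strictly more maximum probability errors strictly dominates. -/

import Mathlib

open Finset Filter

variable {𝓔 𝓢 𝓒 : Type*}

/-- Error probability `P(e) = exp(−E e / T_N) / Σ_{e'} exp(−E e' / T_N)`. -/
noncomputable def Perr [Fintype 𝓔] (E : 𝓔 → ℝ) (T_N : ℝ) (e : 𝓔) : ℝ :=
  Real.exp (-(E e) / T_N) / ∑ e' : 𝓔, Real.exp (-(E e') / T_N)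

/-- Class partition function `Z_T(C) = Σ_{e : c e = C} exp(−E e / T)`. -/
noncomputable def Zpf [Fintype 𝓔] [DecidableEq 𝓒] (c : 𝓔 → 𝓒) (E : 𝓔 → ℝ) (T : ℝ) (C : 𝓒) : ℝ :=
  ∑ e ∈ Finset.univ.filter (fun e => c e = C), Real.exp (-(E e) / T)

/-- Class probability `P(C) = Σ_{e : c e = C} P(e)`. -/
noncomputable def Pclass [Fintype 𝓔] [DecidableEq 𝓒] (c : 𝓔 → 𝓒) (E : 𝓔 → ℝ) (T_N : ℝ) (C : 𝓒) : ℝ :=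
  ∑ e ∈ Finset.univ.filter (fun e => c e = C), Perr E T_N e

/-- Syndrome probability `P(σ) = Σ_{e : s e = σ} P(e)`. -/
noncomputable def Psynd [Fintype 𝓔] [DecidableEq 𝓢] (s : 𝓔 → 𝓢) (E : 𝓔 → ℝ) (T_N : ℝ) (σ : 𝓢) : ℝ :=
  ∑ e ∈ Finset.univ.filter (fun e => s e = σ), Perr E T_N e

/-- The finite set of classes having syndrome `σ`. -/
abbrev classesOf [Fintype 𝓔] [DecidableEq 𝓢] [DecidableEq 𝓒] (s : 𝓔 → 𝓢) (c : 𝓔 → 𝓒) (σ : 𝓢) :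
    Finset 𝓒 :=
  (Finset.univ.filter (fun e => s e = σ)).image c

/-- `Max(σ,T)`: the classes `C` having syndrome `σ` maximizing `Z_T` among classes with syndrome `σ`. -/
noncomputable def MaxSet [Fintype 𝓔] [DecidableEq 𝓢] [DecidableEq 𝓒]
    (s : 𝓔 → 𝓢) (c : 𝓔 → 𝓒) (E : 𝓔 → ℝ) (σ : 𝓢) (T : ℝ) : Finset 𝓒 :=
  (classesOf s c σ).filter (fun C => ∀ C' ∈ classesOf s c σ, Zpf c E T C' ≤ Zpf c E T C)

/-- `n_max(C)`: the number of errors in class `C` attaining the minimal energy `Emin`. -/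
noncomputable def nmax [Fintype 𝓔] [DecidableEq 𝓒] (c : 𝓔 → 𝓒) (E : 𝓔 → ℝ) (Emin : ℝ) (C : 𝓒) : ℕ :=
  (Finset.univ.filter (fun e => c e = C ∧ E e = Emin)).card

/-- if `n_max(C) > n_max(C')` then at sufficiently low temperature
`Z_T(C) > Z_T(C')`. -/
theorem stmt8 {𝓔 𝓢 𝓒 : Type*} [Fintype 𝓔] [Nonempty 𝓔] [DecidableEq 𝓢] [DecidableEq 𝓒]
    (s : 𝓔 → 𝓢) (c : 𝓔 → 𝓒) (E : 𝓔 → ℝ)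
    (hrefine : ∀ e e' : 𝓔, c e = c e' → s e = s e')
    (σ : 𝓢) (hσ : ∃ e, s e = σ)
    (Emin : ℝ) (hEmin : IsLeast (E '' {e | s e = σ}) Emin)
    (C C' : 𝓒) (hC : ∃ e, c e = C ∧ s e = σ) (hC' : ∃ e, c e = C' ∧ s e = σ)
    (hn : nmax c E Emin C' < nmax c E Emin C) :
    ∃ T₀ > (0:ℝ), ∀ T : ℝ, 0 < T → T < T₀ → Zpf c E T C' < Zpf c E T C := by
  classical
  obtain ⟨e0, he0c, he0s⟩ := hC'
  have hsC' : ∀ e : 𝓔, c e = C' → s e = σ := fun e he => by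
    rw [hrefine e e0 (he.trans he0c.symm)]; exact he0s
  have hge : ∀ e : 𝓔, s e = σ → Emin ≤ E e := fun e he => hEmin.2 ⟨e, he, rfl⟩
  set S' : Finset 𝓔 := Finset.univ.filter (fun e => c e = C' ∧ E e ≠ Emin) with hS'
  set δ : ℝ := if h : S'.Nonempty then S'.inf' h (fun e => E e - Emin) else 1 with hδdef
  have hδpos : 0 < δ := by
    rw [hδdef]
    split_ifs with h
    · rw [Finset.lt_inf'_iff]
      intro e he
      simp only [hS', Finset.mem_filter, Finset.mem_univ, true_and] at he
      have h1 := hge e (hsC' e he.1)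
      have : Emin < E e := lt_of_le_of_ne h1 (Ne.symm he.2)
      linarith
    · norm_num
  have hδle : ∀ e ∈ S', Emin + δ ≤ E e := by
    intro e he
    rw [hδdef, dif_pos ⟨e, he⟩]
    have := Finset.inf'_le (fun e => E e - Emin) he
    linarith
  set N : ℝ := (Fintype.card 𝓔 : ℝ) with hNdef
  have hN1 : 1 ≤ N := by
    have := Fintype.card_pos (α := 𝓔)
    rw [hNdef]; exact_mod_cast this
  have hNpos : 0 < N := lt_of_lt_of_le one_pos hN1
  have hlogN : 0 ≤ Real.log N := Real.log_nonneg hN1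
  refine ⟨δ / (Real.log N + 1), by positivity, ?_⟩
  intro T hT hTlt
  have hkey : N * Real.exp (-(Emin + δ) / T) < Real.exp (-Emin / T) := by
    have h1 : Real.log N < δ / T := by
      have h2 : Real.log N + 1 < δ / T := by
        rw [lt_div_iff₀ hT]
        calc (Real.log N + 1) * T < (Real.log N + 1) * (δ / (Real.log N + 1)) := by
              exact mul_lt_mul_of_pos_left hTlt (by positivity)
          _ = δ := by field_simp
      linarith
    have h2 : Real.exp (-(Emin + δ)/T) = Real.exp (-Emin/T) * Real.exp (-δ/T) := by
      rw [← Real.exp_add]; ring_nf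
    rw [h2]
    have h3 : N * Real.exp (-δ/T) < 1 := by
      have hlt : Real.exp (-δ/T) < Real.exp (-Real.log N) := by
        apply Real.exp_lt_exp.mpr
        rw [neg_div]; linarith
      calc N * Real.exp (-δ/T) < N * Real.exp (-Real.log N) :=
            mul_lt_mul_of_pos_left hlt hNpos
        _ = 1 := by rw [Real.exp_neg, Real.exp_log hNpos]; field_simp
    calc N * (Real.exp (-Emin/T) * Real.exp (-δ/T))
        = (N * Real.exp (-δ/T)) * Real.exp (-Emin/T) := by ring
      _ < 1 * Real.exp (-Emin/T) := mul_lt_mul_of_pos_right h3 (Real.exp_pos _)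
      _ = Real.exp (-Emin/T) := one_mul _
  have hsum : ∀ D : 𝓒, ∑ e ∈ Finset.univ.filter (fun e => c e = D ∧ E e = Emin),
      Real.exp (-(E e)/T) = (nmax c E Emin D : ℝ) * Real.exp (-Emin/T) := by
    intro D
    rw [nmax, Finset.sum_congr rfl (g := fun _ => Real.exp (-Emin/T))
      (fun e he => by simp only [Finset.mem_filter] at he; rw [he.2.2]),
      Finset.sum_const, nsmul_eq_mul]
  have hlow : (nmax c E Emin C : ℝ) * Real.exp (-Emin / T) ≤ Zpf c E T C := by
    rw [Zpf, ← hsum C]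
    apply Finset.sum_le_sum_of_subset_of_nonneg
    · intro e he
      simp only [Finset.mem_filter, Finset.mem_univ, true_and] at he ⊢
      exact he.1
    · intro _ _ _; exact (Real.exp_pos _).le
  have hup : Zpf c E T C' ≤ (nmax c E Emin C' : ℝ) * Real.exp (-Emin/T)
      + N * Real.exp (-(Emin + δ)/T) := by
    have hA' : Finset.univ.filter (fun e => c e = C') =
        (Finset.univ.filter (fun e => c e = C' ∧ E e = Emin)) ∪ S' := by
      ext e
      simp only [hS', Finset.mem_filter, Finset.mem_union, Finset.mem_univ, true_and]
      tauto
    have hdisj : Disjoint (Finset.univ.filter (fun e => c e = C' ∧ E e = Emin)) S' := by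
      rw [Finset.disjoint_left]
      intro e he he'
      simp only [hS', Finset.mem_filter, Finset.mem_univ, true_and] at he he'
      exact he'.2 he.2
    rw [Zpf, hA', Finset.sum_union hdisj, hsum C']
    apply add_le_add_right
    calc ∑ e ∈ S', Real.exp (-(E e)/T)
        ≤ ∑ e ∈ S', Real.exp (-(Emin + δ)/T) := by
          apply Finset.sum_le_sum
          intro e he
          apply Real.exp_le_exp.mpr
          have := hδle e he
          apply (div_le_div_iff_of_pos_right hT).mpr
          linarith
      _ = (S'.card : ℝ) * Real.exp (-(Emin + δ)/T) := by
          rw [Finset.sum_const, nsmul_eq_mul]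
      _ ≤ N * Real.exp (-(Emin + δ)/T) := by
          apply mul_le_mul_of_nonneg_right _ (Real.exp_pos _).le
          rw [hNdef]
          exact_mod_cast (Finset.card_filter_le _ _).trans (le_of_eq (Finset.card_univ))
  have hcast : (nmax c E Emin C' : ℝ) + 1 ≤ (nmax c E Emin C : ℝ) := by exact_mod_cast hn
  calc Zpf c E T C' ≤ (nmax c E Emin C' : ℝ) * Real.exp (-Emin/T)
        + N * Real.exp (-(Emin + δ)/T) := hup
    _ < (nmax c E Emin C' : ℝ) * Real.exp (-Emin/T) + Real.exp (-Emin/T) := by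
        linarith
    _ ≤ (nmax c E Emin C : ℝ) * Real.exp (-Emin/T) := by
        nlinarith [Real.exp_pos (-Emin/T)]
    _ ≤ Zpf c E T C := hlow
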